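/- There exists a family of forward tries T_f with n nodes (for infinitely many n) over a binary-or-larger alphabet such that the number of distinct suffixes |Suffix(T_f)| is Ω(n²). Concretely, the trie consisting of a path of length k from the root attached to a complete binary tree with k leaves has at least k(k+1) distinct suffixes while having Θ(k) nodes. -/

import Mathlib

/-- A rooted labeled tree on `n` nodes: node `0` is the root, every non-root
node `v` has a parent with smaller index, and `label v` is the character on
the edge between `v` and its parent. -/
structure LTree (n : ℕ) (A : Type*) where
  parent : Fin n → Fin n
  label : Fin n → A
  hp : ∀ v : Fin n, v.val ≠ 0 → (parent v).val < v.val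

namespace LTree

variable {n : ℕ} {A : Type*}

/-- The string spelled by the path from node `v` up to the root
(read in the leaf-to-root direction). -/
def strUp (T : LTree n A) (v : Fin n) : List A :=
  if h : v.val = 0 then []
  else T.label v :: T.strUp (T.parent v)
termination_by v.val
decreasing_by exact T.hp v h

/-- Substrings of the backward trie: strings spelled by upward paths from a
node to one of its ancestors (prefixes of the upward root-paths). -/
def SubstrU (T : LTree n A) : Set (List A) :=
  { s | ∃ (v : Fin n) (m : ℕ), s = (T.strUp v).take m }

/-- Substrings of the forward trie: strings spelled by downward paths from a
node to one of its descendants. -/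
def SubstrD (T : LTree n A) : Set (List A) :=
  { s | ∃ (v : Fin n) (m : ℕ), s = ((T.strUp v).take m).reverse }

/-- A node is a leaf if no (non-root) node has it as parent. -/
def isLeaf (T : LTree n A) (v : Fin n) : Prop :=
  ∀ u : Fin n, u.val ≠ 0 → T.parent u ≠ v

/-- Suffixes of the forward trie: strings spelled by downward paths from any
node to a leaf below it. -/
def SuffixF (T : LTree n A) : Set (List A) :=
  { s | ∃ v : Fin n, T.isLeaf v ∧ ∃ m : ℕ, s = ((T.strUp v).take m).reverse }

/-- Suffixes of the backward trie: strings spelled by the paths from any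
non-root node up to the root. -/
def SuffixB (T : LTree n A) : Set (List A) :=
  { s | ∃ v : Fin n, v.val ≠ 0 ∧ s = T.strUp v }

/-- The trie condition: out-going edges of each node (equivalently, edges to
the children of each node) carry mutually distinct characters. -/
def isTrie (T : LTree n A) : Prop :=
  ∀ u v : Fin n, u.val ≠ 0 → v.val ≠ 0 →
    T.parent u = T.parent v → T.label u = T.label v → u = v

/-- `X` is right-maximal on the forward trie: it has two distinct right
extensions, or an occurrence ending at a leaf. -/
def rightMaximalF (T : LTree n A) (X : List A) : Prop :=
  (∃ a b : A, a ≠ b ∧ X ++ [a] ∈ T.SubstrD ∧ X ++ [b] ∈ T.SubstrD) ∨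
  (∃ v : Fin n, T.isLeaf v ∧ ∃ m : ℕ, X = ((T.strUp v).take m).reverse)

/-- `X` is left-maximal on the forward trie: it has two distinct left
extensions, or an occurrence beginning at the root. -/
def leftMaximalF (T : LTree n A) (X : List A) : Prop :=
  (∃ a b : A, a ≠ b ∧ (a :: X) ∈ T.SubstrD ∧ (b :: X) ∈ T.SubstrD) ∨
  (∃ v : Fin n, X = (T.strUp v).reverse)

/-- `Y` is left-maximal on the backward trie: two distinct left extensions,
or an occurrence beginning at a leaf. -/
def leftMaximalB (T : LTree n A) (Y : List A) : Prop :=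
  (∃ a b : A, a ≠ b ∧ (a :: Y) ∈ T.SubstrU ∧ (b :: Y) ∈ T.SubstrU) ∨
  (∃ v : Fin n, T.isLeaf v ∧ ∃ m : ℕ, Y = (T.strUp v).take m)

/-- `Y` is right-maximal on the backward trie: two distinct right extensions,
or an occurrence ending at the root. -/
def rightMaximalB (T : LTree n A) (Y : List A) : Prop :=
  (∃ a b : A, a ≠ b ∧ Y ++ [a] ∈ T.SubstrU ∧ Y ++ [b] ∈ T.SubstrU) ∨
  (∃ v : Fin n, Y = T.strUp v)

end LTree

section Aux

lemma strUp_length {n : ℕ} {A : Type*} (T : LTree n A) (v : Fin n) :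
    (T.strUp v).length ≤ v.val := by
  rw [LTree.strUp]
  split
  · simp
  · rename_i h
    have h1 := strUp_length T (T.parent v)
    have h2 := T.hp v h
    simp only [List.length_cons]
    omega
termination_by v.val
decreasing_by exact T.hp v ‹_›

def bitsOfLen : ℕ → ℕ → List (Fin 3)
  | 0, _ => []
  | t+1, h => ⟨h % 2, by omega⟩ :: bitsOfLen t (h / 2)

lemma bitsOfLen_length (t h : ℕ) : (bitsOfLen t h).length = t := by
  induction t generalizing h with
  | zero => rfl
  | succ t ih => simp [bitsOfLen, ih]

lemma bitsOfLen_ne_two (t h : ℕ) : ∀ x ∈ bitsOfLen t h, x ≠ (2 : Fin 3) := by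
  induction t generalizing h with
  | zero => simp [bitsOfLen]
  | succ t ih =>
    intro x hx
    simp only [bitsOfLen, List.mem_cons] at hx
    rcases hx with rfl | hx
    · intro hc
      have : h % 2 = 2 := congrArg Fin.val hc
      omega
    · exact ih _ x hx

lemma bitsOfLen_inj (t : ℕ) : ∀ h h', bitsOfLen t h = bitsOfLen t h' →
    h % 2 ^ t = h' % 2 ^ t := by
  induction t with
  | zero => intro h h' _; simp [Nat.mod_one]
  | succ t ih =>
    intro h h' he
    simp only [bitsOfLen, List.cons.injEq, Fin.mk.injEq] at he
    have h1 := he.1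
    have h2 := ih _ _ he.2
    have e1 : h % (2 * 2 ^ t) = h % 2 + 2 * (h / 2 % 2 ^ t) := Nat.mod_mul
    have e2 : h' % (2 * 2 ^ t) = h' % 2 + 2 * (h' / 2 % 2 ^ t) := Nat.mod_mul
    have e3 : (2:ℕ) ^ (t + 1) = 2 * 2 ^ t := by ring
    rw [e3]
    omega

lemma replicate_append_inj : ∀ (i i' : ℕ) (A A' : List (Fin 3)),
    (∀ x ∈ A, x ≠ (2 : Fin 3)) → (∀ x ∈ A', x ≠ (2 : Fin 3)) →
    A ≠ [] → A' ≠ [] →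
    List.replicate i 2 ++ A = List.replicate i' 2 ++ A' →
    i = i' ∧ A = A' := by
  intro i
  induction i with
  | zero =>
    intro i' A A' hA hA' hne hne' he
    cases i' with
    | zero => simpa using he
    | succ i' =>
      exfalso
      simp only [List.replicate_succ, List.nil_append, List.cons_append] at he
      cases A with
      | nil => exact hne rfl
      | cons a tl =>
        have : a = 2 := by simpa using congrArg (fun l => l.head?) he
        exact hA a List.mem_cons_self this
  | succ i ih =>
    intro i' A A' hA hA' hne hne' he
    cases i' with
    | zero =>
      exfalso
      simp only [List.replicate_succ, List.nil_append, List.cons_append] at he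
      cases A' with
      | nil => exact hne' rfl
      | cons a tl =>
        have : (2 : Fin 3) = a := by simpa using congrArg (fun l => l.head?) he
        exact hA' a List.mem_cons_self this.symm
    | succ i' =>
      simp only [List.replicate_succ, List.cons_append, List.cons.injEq] at he
      obtain ⟨h1, h2⟩ := ih i' A A' hA hA' hne hne' he.2
      exact ⟨by omega, h2⟩

def pathTrie (j : ℕ) : LTree (3 * 2 ^ j - 1) (Fin 3) where
  parent v := if v.val ≤ 2 ^ j then
      ⟨v.val - 1, by have := v.isLt; omega⟩
    else ⟨2 ^ j - 1 + (v.val - 2 ^ j + 1) / 2,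
      by have := v.isLt; have h1 : 1 ≤ 2 ^ j := Nat.one_le_two_pow; omega⟩
  label v := if v.val ≤ 2 ^ j then 2 else ⟨(v.val - 2 ^ j + 1) % 2, by omega⟩
  hp v hv := by
    have h1 : 1 ≤ 2 ^ j := Nat.one_le_two_pow
    by_cases h : v.val ≤ 2 ^ j <;> simp only [h, if_pos, if_neg, ite_true, ite_false] <;> omega

lemma pathTrie_parent (j : ℕ) (v : Fin (3 * 2 ^ j - 1)) :
    (pathTrie j).parent v = if v.val ≤ 2 ^ j then
      ⟨v.val - 1, by have := v.isLt; omega⟩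
    else ⟨2 ^ j - 1 + (v.val - 2 ^ j + 1) / 2,
      by have := v.isLt; have h1 : 1 ≤ 2 ^ j := Nat.one_le_two_pow; omega⟩ := rfl

lemma pathTrie_label (j : ℕ) (v : Fin (3 * 2 ^ j - 1)) :
    (pathTrie j).label v =
      if v.val ≤ 2 ^ j then 2 else ⟨(v.val - 2 ^ j + 1) % 2, by omega⟩ := rfl

lemma pathTrie_strUp_path (j : ℕ) : ∀ i, i ≤ 2 ^ j → ∀ (hlt : i < 3 * 2 ^ j - 1),
    (pathTrie j).strUp ⟨i, hlt⟩ = List.replicate i 2 := by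
  intro i
  induction i with
  | zero => intro _ hlt; rw [LTree.strUp]; simp
  | succ i ih =>
    intro hi hlt
    rw [LTree.strUp]
    have h1 : 1 ≤ 2 ^ j := Nat.one_le_two_pow
    rw [dif_neg (by simp)]
    rw [pathTrie_parent, pathTrie_label]
    have hle : (⟨i + 1, hlt⟩ : Fin (3 * 2 ^ j - 1)).val ≤ 2 ^ j := hi
    rw [if_pos hle, if_pos hle]
    have heq : (⟨(⟨i + 1, hlt⟩ : Fin (3 * 2 ^ j - 1)).val - 1, by simp; omega⟩ : Fin (3 * 2 ^ j - 1))
        = ⟨i, by omega⟩ := by apply Fin.ext; simp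
    rw [heq, ih (by omega) (by omega)]
    rfl

lemma pathTrie_strUp_heap (j : ℕ) : ∀ t, 1 ≤ t → ∀ h, 2 ^ t ≤ h → h < 2 ^ (t + 1) →
    h ≤ 2 * 2 ^ j - 1 → ∀ (hlt : 2 ^ j + h - 1 < 3 * 2 ^ j - 1),
    (pathTrie j).strUp ⟨2 ^ j + h - 1, hlt⟩ =
      bitsOfLen t h ++ List.replicate (2 ^ j) 2 := by
  intro t
  induction t with
  | zero => omega
  | succ t ih =>
    intro _ h h2t h2t1 hh hlt
    have h1 : 1 ≤ 2 ^ j := Nat.one_le_two_pow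
    have ht2 : 1 ≤ 2 ^ t := Nat.one_le_two_pow
    have h2 : 2 ≤ h := by
      have : (2:ℕ) ^ (t + 1) = 2 * 2 ^ t := by ring
      omega
    rw [LTree.strUp]
    rw [dif_neg (by simp; omega)]
    rw [pathTrie_parent, pathTrie_label]
    rw [if_neg (by simp; omega), if_neg (by simp; omega)]
    have hval : (⟨2 ^ j + h - 1, hlt⟩ : Fin (3 * 2 ^ j - 1)).val - 2 ^ j + 1 = h := by
      simp; omega
    simp only [hval]
    have hbits : bitsOfLen (t + 1) h = ⟨h % 2, by omega⟩ :: bitsOfLen t (h / 2) := rfl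
    rw [hbits]
    simp only [List.cons_append, List.cons.injEq]
    refine ⟨by trivial, ?_⟩
    rcases Nat.eq_zero_or_pos t with rfl | htpos
    · -- h ∈ [2, 4), parent is node 2 ^ j
      have hd : h / 2 = 1 := by omega
      have heq : (⟨2 ^ j - 1 + h / 2, by omega⟩ : Fin (3 * 2 ^ j - 1)) = ⟨2 ^ j, by omega⟩ := by
        apply Fin.ext; simp; omega
      rw [heq, pathTrie_strUp_path j (2 ^ j) le_rfl]
      rfl
    · have hd1 : 2 ^ t ≤ h / 2 := by
        have : (2:ℕ) ^ (t + 1) = 2 * 2 ^ t := by ring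
        omega
      have hd2 : h / 2 < 2 ^ (t + 1) := by
        have e1 : (2:ℕ) ^ (t + 2) = 2 * 2 ^ (t+1) := by ring
        have e2 : (2:ℕ) ^ (t + 1) = 2 * 2 ^ t := by ring
        omega
      have hd3 : h / 2 ≤ 2 * 2 ^ j - 1 := by omega
      have heq : (⟨2 ^ j - 1 + h / 2, by omega⟩ : Fin (3 * 2 ^ j - 1))
          = ⟨2 ^ j + h / 2 - 1, by omega⟩ := by
        apply Fin.ext; simp; omega
      rw [heq, ih htpos (h / 2) hd1 hd2 hd3]

lemma pathTrie_isLeaf (j : ℕ) (hj : 1 ≤ j) (v : Fin (3 * 2 ^ j - 1))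
    (hv : 2 * 2 ^ j - 1 ≤ v.val) : (pathTrie j).isLeaf v := by
  intro u hu hc
  have h1 : 2 ≤ 2 ^ j := by
    calc (2:ℕ) = 2 ^ 1 := rfl
    _ ≤ 2 ^ j := Nat.pow_le_pow_right (by omega) hj
  have := congrArg Fin.val hc
  rw [pathTrie_parent] at this
  have hult := u.isLt
  by_cases h : u.val ≤ 2 ^ j
  · rw [if_pos h] at this; simp only [Fin.val_mk] at this; omega
  · rw [if_neg h] at this; simp only [Fin.val_mk] at this; omega

lemma pathTrie_isTrie (j : ℕ) : (pathTrie j).isTrie := by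
  intro u v hu hv hpar hlab
  have h1 : 1 ≤ 2 ^ j := Nat.one_le_two_pow
  have hpar' := congrArg Fin.val hpar
  have hlab' := congrArg Fin.val hlab
  rw [pathTrie_parent, pathTrie_parent] at hpar'
  rw [pathTrie_label, pathTrie_label] at hlab'
  have hult := u.isLt
  have hvlt := v.isLt
  apply Fin.ext
  by_cases h : u.val ≤ 2 ^ j <;> by_cases h' : v.val ≤ 2 ^ j
  · rw [if_pos h, if_pos h'] at hpar'; simp only [Fin.val_mk] at hpar'; omega
  · rw [if_pos h, if_neg h'] at hpar'; simp only [Fin.val_mk] at hpar'; omega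
  · rw [if_neg h, if_pos h'] at hpar'; simp only [Fin.val_mk] at hpar'; omega
  · rw [if_neg h, if_neg h'] at hpar'
    rw [if_neg h, if_neg h'] at hlab'
    simp only [Fin.val_mk] at hpar' hlab'
    omega

end Aux

/-- there is a family of forward tries (a path of length `k = 2^j`
attached to a complete binary tree with `k` leaves) with `Θ(k)` nodes and at
least `k(k+1)` distinct suffixes; hence `|Suffix(T_f)| = Ω(n²)` for infinitely
many `n`, over an alphabet of size `≥ 2`. -/
theorem stmt1 :
    ∀ j : ℕ, 1 ≤ j → ∃ (n : ℕ) (T : LTree n (Fin 3)),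
      T.isTrie ∧ 2 ^ j ≤ n ∧ n ≤ 4 * 2 ^ j ∧
      2 ^ j * (2 ^ j + 1) ≤ T.SuffixF.ncard := by
  intro j hj
  have h1 : 1 ≤ 2 ^ j := Nat.one_le_two_pow
  have h2 : 2 ≤ 2 ^ j := by
    calc (2:ℕ) = 2 ^ 1 := rfl
    _ ≤ 2 ^ j := Nat.pow_le_pow_right (by omega) hj
  refine ⟨3 * 2 ^ j - 1, pathTrie j, pathTrie_isTrie j, by omega, by omega, ?_⟩
  set F : Fin (2 ^ j + 1) × Fin (2 ^ j) → List (Fin 3) :=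
    fun p => List.replicate p.1.val 2 ++ (bitsOfLen j (2 ^ j + p.2.val)).reverse with hF
  have hbitlen : ∀ s : ℕ, (bitsOfLen j (2 ^ j + s)).length = j := fun s => bitsOfLen_length j _
  have hbitne : ∀ s : ℕ, (bitsOfLen j (2 ^ j + s)).reverse ≠ [] := by
    intro s hc
    have := congrArg List.length hc
    simp [hbitlen] at this
    omega
  have hbit2 : ∀ s : ℕ, ∀ x ∈ (bitsOfLen j (2 ^ j + s)).reverse, x ≠ (2 : Fin 3) := by
    intro s x hx
    exact bitsOfLen_ne_two j _ x (List.mem_reverse.mp hx)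
  -- membership of range F in SuffixF
  have hmem : ∀ p, F p ∈ (pathTrie j).SuffixF := by
    rintro ⟨i, s⟩
    have hs := s.isLt
    have hi := i.isLt
    have hpow : (2:ℕ) ^ (j + 1) = 2 * 2 ^ j := by ring
    have hlt : 2 ^ j + (2 ^ j + s.val) - 1 < 3 * 2 ^ j - 1 := by omega
    refine ⟨⟨2 ^ j + (2 ^ j + s.val) - 1, hlt⟩,
      pathTrie_isLeaf j hj _ (by simp only [Fin.val_mk]; omega), j + i.val, ?_⟩
    rw [pathTrie_strUp_heap j j hj (2 ^ j + s.val) (by omega) (by omega) (by omega) hlt]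
    rw [show j + i.val = (bitsOfLen j (2 ^ j + s.val)).length + i.val from by rw [hbitlen]]
    rw [List.take_length_add_append, List.take_replicate, List.reverse_append, List.reverse_replicate]
    have : min i.val (2 ^ j) = i.val := by omega
    rw [this]
  have hinj : Function.Injective F := by
    rintro ⟨i, s⟩ ⟨i', s'⟩ he
    simp only [hF] at he
    obtain ⟨hi, hA⟩ := replicate_append_inj i.val i'.val _ _ (hbit2 s.val) (hbit2 s'.val)
      (hbitne s.val) (hbitne s'.val) he
    have hb : bitsOfLen j (2 ^ j + s.val) = bitsOfLen j (2 ^ j + s'.val) :=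
      List.reverse_injective hA
    have hmod := bitsOfLen_inj j _ _ hb
    rw [Nat.add_mod_left, Nat.add_mod_left, Nat.mod_eq_of_lt s.isLt,
      Nat.mod_eq_of_lt s'.isLt] at hmod
    exact Prod.ext (Fin.ext hi) (Fin.ext hmod)
  have hfin : (pathTrie j).SuffixF.Finite := by
    apply Set.Finite.subset (Set.finite_range (fun p : Fin (3 * 2 ^ j - 1) × Fin (3 * 2 ^ j) =>
      (((pathTrie j).strUp p.1).take p.2.val).reverse))
    rintro x ⟨v, hv, m, rfl⟩
    have hlen := strUp_length (pathTrie j) v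
    have hvlt := v.isLt
    refine ⟨(v, ⟨min m (((pathTrie j).strUp v).length), by omega⟩), ?_⟩
    simp only [Fin.val_mk]
    congr 1
    rw [List.take_eq_take_iff]
    omega
  have hsub : Set.range F ⊆ (pathTrie j).SuffixF := by
    rintro x ⟨p, rfl⟩; exact hmem p
  have hcard : (Set.range F).ncard = 2 ^ j * (2 ^ j + 1) := by
    rw [← Nat.card_coe_set_eq, Nat.card_range_of_injective hinj]
    simp [Nat.card_eq_fintype_card]
    ring
  have := Set.ncard_le_ncard hsub hfin
  omega
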